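/- Let A be an n×n real Hurwitz matrix and Θ an n×n real matrix. Then D = ∫₀^∞ e^{tA} Θ e^{tAᵀ} dt converges and satisfies the Lyapunov equation A D + D Aᵀ = −Θ. -/

import Mathlib

open MeasureTheory Matrix NormedSpace

attribute [local instance] Matrix.frobeniusNormedAddCommGroup Matrix.frobeniusNormedSpace

namespace Stmt10Aux

open scoped Nat

attribute [local instance] Matrix.frobeniusNormedRing Matrix.frobeniusNormedAlgebra

variable {n : ℕ}

-- exp acts on eigenvectors
lemma mulVec_exp (B : Matrix (Fin n) (Fin n) ℂ) (v : Fin n → ℂ) (lam : ℂ)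
    (h : B.mulVec v = lam • v) :
    (exp B).mulVec v = Complex.exp lam • v := by
  have hpow : ∀ k : ℕ, (B ^ k).mulVec v = lam ^ k • v := by
    intro k
    induction k with
    | zero => simp [Matrix.one_mulVec]
    | succ k ih =>
      rw [pow_succ, ← Matrix.mulVec_mulVec, h, Matrix.mulVec_smul, ih, smul_smul, pow_succ, mul_comm lam]
  have hL : ∃ L : Matrix (Fin n) (Fin n) ℂ →L[ℂ] (Fin n → ℂ),
      ∀ M : Matrix (Fin n) (Fin n) ℂ, L M = M.mulVec v := by
    refine ⟨LinearMap.toContinuousLinearMap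
      { toFun := fun M : Matrix (Fin n) (Fin n) ℂ => M.mulVec v,
        map_add' := fun M N => Matrix.add_mulVec M N v,
        map_smul' := fun c M => (Matrix.smul_mulVec c M v) }, fun M => rfl⟩
  obtain ⟨L, hLdef⟩ := hL
  have hsum : Summable fun k : ℕ => (k ! : ℂ)⁻¹ • B ^ k := expSeries_summable' B
  have h1 : (exp B).mulVec v = ∑' k : ℕ, (k ! : ℂ)⁻¹ • (B ^ k).mulVec v := by
    rw [← hLdef, exp_eq_tsum ℂ, L.map_tsum hsum]
    refine tsum_congr fun k => ?_
    rw [_root_.map_smul, hLdef]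
  rw [h1]
  have h2 : ∀ k : ℕ, (k ! : ℂ)⁻¹ • (B ^ k).mulVec v = ((k ! : ℂ)⁻¹ * lam ^ k) • v := by
    intro k; rw [hpow k, smul_smul]
  simp only [h2]
  have hsum2 : Summable fun k : ℕ => (k ! : ℂ)⁻¹ * lam ^ k := by
    simpa [smul_eq_mul] using expSeries_summable' (𝕂 := ℂ) lam
  rw [hsum2.tsum_smul_const]
  congr 1
  rw [Complex.exp_eq_exp_ℂ, exp_eq_tsum ℂ]
  simp [smul_eq_mul]

-- spectral mapping
lemma spectral_mapping (B : Matrix (Fin n) (Fin n) ℂ) (μ : ℂ)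
    (hμ : μ ∈ spectrum ℂ (exp B)) :
    ∃ lam ∈ spectrum ℂ B, Complex.exp lam = μ := by
  set g : Module.End ℂ (Fin n → ℂ) := Matrix.toLinAlgEquiv' (exp B) with hg
  set f : Module.End ℂ (Fin n → ℂ) := Matrix.toLinAlgEquiv' B with hf
  have happg : ∀ x : Fin n → ℂ, g x = (exp B).mulVec x := fun x => rfl
  have happf : ∀ x : Fin n → ℂ, f x = B.mulVec x := fun x => rfl
  have hμg : μ ∈ spectrum ℂ g := by
    rw [hg, AlgEquiv.spectrum_eq]; exact hμ
  have hev : g.HasEigenvalue μ := Module.End.HasEigenvalue.of_mem_spectrum hμg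
  set E := g.eigenspace μ with hE
  have hEnt : Nontrivial E := Submodule.nontrivial_iff_ne_bot.mpr hev
  have hcomm : f * g = g * f := by
    rw [hf, hg, ← _root_.map_mul, ← _root_.map_mul]
    exact congrArg _ ((Commute.refl B).exp_right)
  have hinv : ∀ x ∈ E, f x ∈ E := by
    intro x hx
    rw [hE, Module.End.mem_eigenspace_iff] at hx ⊢
    have hcx : f (g x) = g (f x) := LinearMap.congr_fun hcomm x
    rw [← hcx, hx, _root_.map_smul]
  obtain ⟨lam, hlam⟩ := Module.End.exists_eigenvalue (f.restrict hinv)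
  obtain ⟨w, hw⟩ := hlam.exists_hasEigenvector
  have hweq : f (w : Fin n → ℂ) = lam • (w : Fin n → ℂ) := by
    have h1 : (f.restrict hinv) w = lam • w := hw.apply_eq_smul
    have h2 := congrArg (Subtype.val) h1
    simpa using h2
  have hwne : (w : Fin n → ℂ) ≠ 0 := by
    simpa [Submodule.coe_eq_zero] using hw.2
  have hlamf : f.HasEigenvalue lam :=
    Module.End.hasEigenvalue_of_hasEigenvector ⟨Module.End.mem_eigenspace_iff.mpr hweq, hwne⟩
  have hlamspec : lam ∈ spectrum ℂ B := by
    rw [← AlgEquiv.spectrum_eq (Matrix.toLinAlgEquiv' (R := ℂ)) B]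
    exact Module.End.hasEigenvalue_iff_mem_spectrum.mp hlamf
  refine ⟨lam, hlamspec, ?_⟩
  have hmv : B.mulVec (w : Fin n → ℂ) = lam • (w : Fin n → ℂ) := by
    rw [← happf]; exact hweq
  have h2 : (exp B).mulVec (w : Fin n → ℂ) = Complex.exp lam • (w : Fin n → ℂ) :=
    mulVec_exp B _ lam hmv
  have h3 : (exp B).mulVec (w : Fin n → ℂ) = μ • (w : Fin n → ℂ) := by
    rw [← happg]
    exact Module.End.mem_eigenspace_iff.mp w.2
  have h4 : (Complex.exp lam - μ) • (w : Fin n → ℂ) = 0 := by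
    rw [sub_smul, ← h2, ← h3, sub_self]
  rcases smul_eq_zero.mp h4 with h | h
  · exact sub_eq_zero.mp h
  · exact absurd h hwne


lemma spectralRadius_exp_lt_one (B : Matrix (Fin n) (Fin n) ℂ)
    (h : ∀ lam ∈ spectrum ℂ B, lam.re < 0) :
    spectralRadius ℂ (exp B) < 1 := by
  have hfin := Matrix.finite_spectrum (R := ℂ) (exp B)
  have hb : ∀ μ ∈ spectrum ℂ (exp B), ‖μ‖₊ < 1 := by
    intro μ hμ
    obtain ⟨lam, hlam, rfl⟩ := spectral_mapping B μ hμ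
    rw [← NNReal.coe_lt_coe, coe_nnnorm, NNReal.coe_one, Complex.norm_exp]
    exact Real.exp_lt_one_iff.mpr (h lam hlam)
  have hle : spectralRadius ℂ (exp B) ≤
      ((hfin.toFinset.sup fun μ => ‖μ‖₊ : NNReal) : ENNReal) := by
    refine iSup₂_le fun μ hμ => ?_
    exact_mod_cast Finset.le_sup (f := fun μ => ‖μ‖₊) (hfin.mem_toFinset.mpr hμ)
  refine lt_of_le_of_lt hle ?_
  have : (hfin.toFinset.sup fun μ => ‖μ‖₊) < 1 := by
    refine Finset.sup_lt_iff (by norm_num) |>.mpr fun μ hμ => hb μ (hfin.mem_toFinset.mp hμ)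
  exact_mod_cast this

lemma exists_pow_bound (a : Matrix (Fin n) (Fin n) ℂ) (ha : spectralRadius ℂ a < 1) :
    ∃ r : ℝ, 0 < r ∧ r < 1 ∧ ∃ C : ℝ, 1 ≤ C ∧ ∀ k : ℕ, ‖a ^ k‖ ≤ C * r ^ k := by
  obtain ⟨c, hc1, hc2⟩ := ENNReal.lt_iff_exists_nnreal_btwn.mp ha
  have hc0 : 0 < c := by
    rcases eq_or_lt_of_le (zero_le : 0 ≤ c) with hc | hc
    · exfalso; rw [← hc] at hc1; simp at hc1
    · exact hc
  have htends := spectrum.pow_nnnorm_pow_one_div_tendsto_nhds_spectralRadius a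
  have hev : ∀ᶠ k : ℕ in Filter.atTop, (‖a ^ k‖₊ : ENNReal) ^ (1/(k:ℝ)) < (c : ENNReal) :=
    htends.eventually_lt_const hc1
  obtain ⟨N, hN⟩ := Filter.eventually_atTop.mp hev
  have key : ∀ k : ℕ, N ≤ k → 1 ≤ k → ‖a ^ k‖₊ ≤ c ^ k := by
    intro k hk hk1
    have h1 : ((‖a ^ k‖₊ : ENNReal) ^ (1/(k:ℝ))) ^ (k : ℝ) ≤ (c : ENNReal) ^ (k : ℝ) :=
      ENNReal.rpow_le_rpow (hN k hk).le (Nat.cast_nonneg k)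
    have hkne : (k : ℝ) ≠ 0 := Nat.cast_ne_zero.mpr (by omega)
    rw [← ENNReal.rpow_mul, one_div, inv_mul_cancel₀ hkne, ENNReal.rpow_one] at h1
    rw [ENNReal.rpow_natCast, ← ENNReal.coe_pow] at h1
    exact_mod_cast h1
  set r : ℝ := (c : ℝ) with hr
  have hr0 : 0 < r := hc0
  have hr1 : r < 1 := by
    have := hc2
    rw [← ENNReal.coe_one, ENNReal.coe_lt_coe] at this
    exact_mod_cast this
  set C : ℝ := max 1 ((Finset.range (N+1)).sup' ⟨0, by simp⟩ fun k => ‖a ^ k‖ / r ^ k) with hC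
  refine ⟨r, hr0, hr1, C, le_max_left _ _, fun k => ?_⟩
  rcases lt_or_ge k (N+1) with hk | hk
  · have h1 : ‖a ^ k‖ / r ^ k ≤ C :=
      le_trans (Finset.le_sup' (f := fun k => ‖a ^ k‖ / r ^ k) (Finset.mem_range.mpr hk))
        (le_max_right _ _)
    have hrk : (0:ℝ) < r ^ k := pow_pos hr0 k
    calc ‖a ^ k‖ = ‖a ^ k‖ / r ^ k * r ^ k := by field_simp
    _ ≤ C * r ^ k := mul_le_mul_of_nonneg_right h1 hrk.le
  · have h2 : ‖a ^ k‖₊ ≤ c ^ k := key k (by omega) (by omega)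
    have h3 : ‖a ^ k‖ ≤ r ^ k := by exact_mod_cast h2
    calc ‖a ^ k‖ ≤ r ^ k := h3
    _ = 1 * r ^ k := (one_mul _).symm
    _ ≤ C * r ^ k := mul_le_mul_of_nonneg_right (le_max_left _ _) (pow_nonneg hr0.le k)

lemma exists_exp_decay (M : Matrix (Fin n) (Fin n) ℂ)
    (hM : spectralRadius ℂ (exp M) < 1) :
    ∃ b : ℝ, 0 < b ∧ ∃ C : ℝ, 0 < C ∧
      ∀ t : ℝ, 0 ≤ t → ‖exp (t • M)‖ ≤ C * Real.exp (-b * t) := by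
  obtain ⟨r, hr0, hr1, C0, hC0, hbound⟩ := exists_pow_bound _ hM
  have hcont : Continuous fun s : ℝ => exp (s • M) :=
    exp_continuous.comp (continuous_id.smul continuous_const)
  obtain ⟨K, hK⟩ := (isCompact_Icc (a := (0:ℝ)) (b := 1)).exists_bound_of_continuousOn
    hcont.continuousOn
  set K' : ℝ := max K 1 with hK'
  have hK'1 : 1 ≤ K' := le_max_right _ _
  set b : ℝ := -Real.log r with hb
  have hb0 : 0 < b := by
    rw [hb, neg_pos]; exact Real.log_neg hr0 hr1
  refine ⟨b, hb0, C0 * K' / r, by positivity, fun t ht => ?_⟩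
  set k : ℕ := ⌊t⌋₊ with hk
  set s : ℝ := t - k with hs
  have hs0 : 0 ≤ s := by
    rw [hs, sub_nonneg]; exact Nat.floor_le ht
  have hs1 : s ≤ 1 := by
    rw [hs, sub_le_iff_le_add]
    exact (Nat.lt_floor_add_one t).le.trans (by rw [add_comm])
  have hsplit : exp (t • M) = exp M ^ k * exp (s • M) := by
    have ht' : t • M = (k : ℝ) • M + s • M := by
      rw [← add_smul]; congr 1; rw [hs]; ring
    have e1 : exp ((k:ℝ) • M + s • M) = exp ((k:ℝ) • M) * exp (s • M) :=
      Matrix.exp_add_of_commute _ _ (((Commute.refl M).smul_left _).smul_right _)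
    have e2 : exp ((k:ℝ) • M) = exp M ^ k := by
      rw [Nat.cast_smul_eq_nsmul]
      exact Matrix.exp_nsmul k M
    rw [ht', e1, e2]
  have h1 : ‖exp (t • M)‖ ≤ (C0 * r ^ k) * K' := by
    rw [hsplit]
    refine le_trans (norm_mul_le _ _) (mul_le_mul (hbound k) ?_ (norm_nonneg _) ?_)
    · exact le_trans (hK s ⟨hs0, hs1⟩) (le_max_left _ _)
    · positivity
  refine h1.trans ?_
  have h2 : r ^ k ≤ Real.exp (-b * t) / r := by
    have hk2 : (t - 1 : ℝ) ≤ (k : ℝ) := by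
      have := Nat.lt_floor_add_one t
      rw [← hk] at this
      linarith
    have h3 : (r : ℝ) ^ (k : ℝ) ≤ r ^ (t - 1 : ℝ) :=
      Real.rpow_le_rpow_of_exponent_ge hr0 hr1.le hk2
    rw [Real.rpow_natCast] at h3
    refine h3.trans_eq ?_
    rw [Real.rpow_def_of_pos hr0, hb, mul_sub, mul_one, Real.exp_sub, Real.exp_log hr0,
      neg_neg]
  calc C0 * r ^ k * K' ≤ C0 * (Real.exp (-b * t) / r) * K' :=
        mul_le_mul_of_nonneg_right (mul_le_mul_of_nonneg_left h2 (by linarith)) (by linarith)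
  _ = C0 * K' / r * Real.exp (-b * t) := by ring


lemma norm_map_complex (M : Matrix (Fin n) (Fin n) ℝ) :
    ‖M.map (algebraMap ℝ ℂ)‖ = ‖M‖ :=
  Matrix.frobenius_norm_map_eq M _ fun a => by
    simp [Complex.norm_real]

lemma exp_map_complex (M : Matrix (Fin n) (Fin n) ℝ) :
    (exp M).map (algebraMap ℝ ℂ) = exp (M.map (algebraMap ℝ ℂ)) := by
  have hcont : Continuous (⇑((algebraMap ℝ ℂ).mapMatrix) :
      Matrix (Fin n) (Fin n) ℝ → Matrix (Fin n) (Fin n) ℂ) := by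
    let φL : Matrix (Fin n) (Fin n) ℝ →ₗ[ℝ] Matrix (Fin n) (Fin n) ℂ :=
      { toFun := fun M => M.map (algebraMap ℝ ℂ)
        map_add' := fun M N => by ext i j; simp [Matrix.map_apply]
        map_smul' := fun c M => by
          ext i j; simp [Matrix.map_apply, Complex.real_smul] }
    exact φL.continuous_of_finiteDimensional
  have h1 := map_exp ((algebraMap ℝ ℂ).mapMatrix) hcont M
  rw [RingHom.mapMatrix_apply, RingHom.mapMatrix_apply] at h1
  exact h1

lemma real_decay (A : Matrix (Fin n) (Fin n) ℝ)
    (h : ∀ μ ∈ spectrum ℂ (A.map (algebraMap ℝ ℂ)), μ.re < 0) :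
    ∃ b C : ℝ, 0 < b ∧ 0 < C ∧ ∀ t : ℝ, 0 ≤ t →
      ‖exp (t • A)‖ ≤ C * Real.exp (-b * t) := by
  obtain ⟨b, hb, C, hC, hdecay⟩ := exists_exp_decay (A.map (algebraMap ℝ ℂ))
    (spectralRadius_exp_lt_one _ h)
  refine ⟨b, C, hb, hC, fun t ht => ?_⟩
  have hsm : (t • A).map (algebraMap ℝ ℂ) = t • A.map (algebraMap ℝ ℂ) := by
    ext i j
    simp [Matrix.map_apply, Complex.real_smul]
  have heq : ‖exp (t • A)‖ = ‖exp (t • A.map (algebraMap ℝ ℂ))‖ := by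
    rw [← norm_map_complex, exp_map_complex, hsm]
  rw [heq]
  exact hdecay t ht


theorem main_aux (A Θ : Matrix (Fin n) (Fin n) ℝ)
    (hHurwitz : ∀ μ ∈ spectrum ℂ (A.map (algebraMap ℝ ℂ)), μ.re < 0) :
    @IntegrableOn _ _ _ _ SeminormedAddGroup.toContinuousENorm (fun t : ℝ => exp (t • A) * Θ * exp (t • Aᵀ)) (Set.Ioi 0) volume ∧
      A * (∫ t in Set.Ioi (0 : ℝ), exp (t • A) * Θ * exp (t • Aᵀ)) +
        (∫ t in Set.Ioi (0 : ℝ), exp (t • A) * Θ * exp (t • Aᵀ)) * Aᵀ = -Θ := by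
  obtain ⟨b, C, hb, hC, hdecay⟩ := real_decay A hHurwitz
  set F : ℝ → Matrix (Fin n) (Fin n) ℝ :=
    fun t => exp (t • A) * Θ * exp (t • Aᵀ) with hF
  have hTnorm : ∀ t : ℝ, ‖exp (t • Aᵀ)‖ = ‖exp (t • A)‖ := by
    intro t
    rw [← Matrix.transpose_smul, Matrix.exp_transpose, Matrix.frobenius_norm_transpose]
  have hFb : ∀ t : ℝ, 0 ≤ t → ‖F t‖ ≤ C * C * ‖Θ‖ * Real.exp (-(2*b) * t) := by
    intro t ht
    have h1 := hdecay t ht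
    have h0 : (0:ℝ) ≤ Real.exp (-b * t) := (Real.exp_pos _).le
    calc ‖F t‖ ≤ ‖exp (t • A) * Θ‖ * ‖exp (t • Aᵀ)‖ := norm_mul_le _ _
    _ ≤ ‖exp (t • A)‖ * ‖Θ‖ * ‖exp (t • Aᵀ)‖ :=
        mul_le_mul_of_nonneg_right (norm_mul_le _ _) (norm_nonneg _)
    _ = ‖exp (t • A)‖ * ‖Θ‖ * ‖exp (t • A)‖ := by rw [hTnorm]
    _ ≤ (C * Real.exp (-b * t)) * ‖Θ‖ * (C * Real.exp (-b * t)) :=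
        mul_le_mul (mul_le_mul_of_nonneg_right h1 (norm_nonneg _)) h1 (norm_nonneg _)
          (by positivity)
    _ = C * C * ‖Θ‖ * (Real.exp (-b * t) * Real.exp (-b * t)) := by ring
    _ = C * C * ‖Θ‖ * Real.exp (-(2*b) * t) := by
        rw [← Real.exp_add]; ring_nf
  have hcont1 : Continuous fun t : ℝ => exp (t • A) :=
    exp_continuous.comp (continuous_id.smul continuous_const)
  have hcont2 : Continuous fun t : ℝ => exp (t • Aᵀ) :=
    exp_continuous.comp (continuous_id.smul continuous_const)
  have hcont : Continuous F := (hcont1.mul continuous_const).mul hcont2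
  have hexpint : IntegrableOn (fun t : ℝ => Real.exp (-(2*b) * t)) (Set.Ioi 0) volume :=
    exp_neg_integrableOn_Ioi 0 (by linarith)
  have hFint : @IntegrableOn _ _ _ _ SeminormedAddGroup.toContinuousENorm F (Set.Ioi 0) volume := by
    refine Integrable.mono' (hexpint.const_mul (C * C * ‖Θ‖))
      (show @Continuous ℝ _ _ PseudoMetricSpace.toUniformSpace.toTopologicalSpace F from hcont).aestronglyMeasurable.restrict ?_
    filter_upwards [ae_restrict_mem measurableSet_Ioi] with t ht
    exact hFb t (le_of_lt ht)
  set G : ℝ → Matrix (Fin n) (Fin n) ℝ := fun t => A * F t + F t * Aᵀ with hG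
  have hderiv : ∀ t : ℝ, HasDerivAt F (G t) t := by
    intro t
    have h1 : HasDerivAt (fun u : ℝ => exp (u • A)) (A * exp (t • A)) t :=
      hasDerivAt_exp_smul_const' A t
    have h2 : HasDerivAt (fun u : ℝ => exp (u • Aᵀ)) (exp (t • Aᵀ) * Aᵀ) t :=
      hasDerivAt_exp_smul_const Aᵀ t
    have h3 := (h1.mul_const Θ).mul h2
    have h3' : HasDerivAt F (A * exp (t • A) * Θ * exp (t • Aᵀ) + exp (t • A) * Θ * (exp (t • Aᵀ) * Aᵀ)) t := h3
    convert h3' using 1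
    simp only [hG, hF]
    noncomm_ring
  set L1 : Matrix (Fin n) (Fin n) ℝ →L[ℝ] Matrix (Fin n) (Fin n) ℝ :=
    LinearMap.toContinuousLinearMap (LinearMap.mulLeft ℝ A) with hL1
  set L2 : Matrix (Fin n) (Fin n) ℝ →L[ℝ] Matrix (Fin n) (Fin n) ℝ :=
    LinearMap.toContinuousLinearMap (LinearMap.mulRight ℝ Aᵀ) with hL2
  have hL1app : ∀ M, L1 M = A * M := fun M => rfl
  have hL2app : ∀ M, L2 M = M * Aᵀ := fun M => rfl
  have hGint : @IntegrableOn _ _ _ _ SeminormedAddGroup.toContinuousENorm G (Set.Ioi 0) volume := by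
    have i1 : @IntegrableOn _ _ _ _ SeminormedAddGroup.toContinuousENorm (fun t => A * F t) (Set.Ioi 0) volume := by
      exact L1.integrable_comp hFint
    have i2 : @IntegrableOn _ _ _ _ SeminormedAddGroup.toContinuousENorm (fun t => F t * Aᵀ) (Set.Ioi 0) volume := by
      exact L2.integrable_comp hFint
    exact i1.add i2
  have htend : Filter.Tendsto F Filter.atTop (nhds 0) := by
    have hg : Filter.Tendsto (fun t : ℝ => C * C * ‖Θ‖ * Real.exp (-(2*b) * t))
        Filter.atTop (nhds 0) := by
      rw [show (0:ℝ) = C * C * ‖Θ‖ * 0 by ring]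
      refine Filter.Tendsto.const_mul _ ?_
      have h5 : Filter.Tendsto (fun t : ℝ => (2*b) * t) Filter.atTop Filter.atTop :=
        Filter.Tendsto.const_mul_atTop (by linarith) Filter.tendsto_id
      have h4 := Real.tendsto_exp_neg_atTop_nhds_zero.comp h5
      simpa [Function.comp_def] using h4
    refine squeeze_zero_norm' ?_ hg
    filter_upwards [Filter.eventually_ge_atTop (0:ℝ)] with t ht
    exact hFb t ht
  have hFTC : ∫ t in Set.Ioi (0:ℝ), G t = 0 - F 0 :=
    integral_Ioi_of_hasDerivAt_of_tendsto
      hcont.continuousWithinAt (fun x _ => hderiv x) hGint htend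
  have hF0 : F 0 = Θ := by
    simp [hF]
  have hsplit : ∫ t in Set.Ioi (0:ℝ), G t
      = A * (∫ t in Set.Ioi (0:ℝ), F t) + (∫ t in Set.Ioi (0:ℝ), F t) * Aᵀ := by
    have i1 : @IntegrableOn _ _ _ _ SeminormedAddGroup.toContinuousENorm (fun t => A * F t) (Set.Ioi 0) volume := by
      exact L1.integrable_comp hFint
    have i2 : @IntegrableOn _ _ _ _ SeminormedAddGroup.toContinuousENorm (fun t => F t * Aᵀ) (Set.Ioi 0) volume := by
      exact L2.integrable_comp hFint
    rw [hG]
    rw [integral_add i1 i2]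
    congr 1
    · have := L1.integral_comp_comm hFint
      exact this
    · have := L2.integral_comp_comm hFint
      exact this
  refine ⟨hFint, ?_⟩
  rw [← hsplit, hFTC, hF0, zero_sub]

end Stmt10Aux


theorem stmt_10 {n : ℕ} (A Θ : Matrix (Fin n) (Fin n) ℝ)
    (hHurwitz : ∀ μ ∈ spectrum ℂ (A.map (algebraMap ℝ ℂ)), μ.re < 0) :
    @IntegrableOn _ _ _ _ SeminormedAddGroup.toContinuousENorm (fun t : ℝ => exp (t • A) * Θ * exp (t • Aᵀ)) (Set.Ioi 0) volume ∧
      A * (∫ t in Set.Ioi (0 : ℝ), exp (t • A) * Θ * exp (t • Aᵀ)) +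
        (∫ t in Set.Ioi (0 : ℝ), exp (t • A) * Θ * exp (t • Aᵀ)) * Aᵀ = -Θ := by
  exact Stmt10Aux.main_aux A Θ hHurwitz
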